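/- For all integers k, l ≥ 1 and every sufficiently large integer d there exists a result F of a collision in degree d of the germ at the origin of the A_k-singularity {u²+v^{k+1}=0} and the germ at the origin of the A_l-singularity {u²+v^{l+1}=0}, such that the germ of {F=0} at the origin is topologically equivalent to the germ at the origin of the A_{k+l+1}-singularity {u²+v^{k+l+2}=0}. -/

import Mathlib

open MvPolynomial Filter

noncomputable section

/-- Points of the complex plane ℂ². -/
abbrev Pt : Type := Fin 2 → ℂ

/-- Polynomials in the two variables `u = X 0`, `v = X 1` over ℂ. -/
abbrev Poly2 : Type := MvPolynomial (Fin 2) ℂ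

/-- The zero set of a polynomial in ℂ². -/
def zeroSet (f : Poly2) : Set Pt := {p | eval p f = 0}

/-- The germs `(V, a)` and `(W, b)` of plane curves are topologically equivalent:
there are open neighbourhoods `U ∋ a`, `U' ∋ b` and a homeomorphism `φ : U ≃ₜ U'`
with `φ a = b` carrying `V ∩ U` onto `W ∩ U'`. -/
def GermEquiv (V : Set Pt) (a : Pt) (W : Set Pt) (b : Pt) : Prop :=
  ∃ (U U' : Set Pt), IsOpen U ∧ IsOpen U' ∧ b ∈ U' ∧
    ∃ (φ : U ≃ₜ U') (ha : a ∈ U),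
      ((φ ⟨a, ha⟩ : U') : Pt) = b ∧
      ∀ x : U, (x : Pt) ∈ V ↔ ((φ x : U') : Pt) ∈ W

/-- The polynomial `f (a + ·)`, i.e. `f` translated so that `a` becomes the origin. -/
def shiftBy (a : Pt) (f : Poly2) : Poly2 := bind₁ (fun i => X i + C (a i)) f

/-- The multiplicity `mult_a f`: the least total degree of a monomial occurring
in the Taylor expansion of `f` at `a`. -/
def multAt (a : Pt) (f : Poly2) : ℕ :=
  sInf {n | homogeneousComponent n (shiftBy a f) ≠ 0}

/-- The lowest form of `f` at `a`: the homogeneous part of `f (a + ·)` of degree `mult_a f`. -/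
def lowestForm (a : Pt) (f : Poly2) : Poly2 :=
  homogeneousComponent (multAt a f) (shiftBy a f)

/-- `F` (of degree ≤ d) is a result of a collision in degree `d` of the germs at the origin
of `{fx = 0}` and `{fy = 0}`: there are curves `{Fₙ = 0}` of degree ≤ d having a singular
point of the topological type of `fx` at the origin and one of the topological type of `fy`
at a point `yₙ ≠ 0`, with `yₙ → 0` and `Fₙ → F` coefficient-wise. -/
def IsCollisionResult (d : ℕ) (fx fy F : Poly2) : Prop :=
  F.totalDegree ≤ d ∧
  ∃ (Fs : ℕ → Poly2) (y : ℕ → Pt),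
    (∀ n, (Fs n).totalDegree ≤ d) ∧
    (∀ n, y n ≠ 0) ∧
    Tendsto y atTop (nhds 0) ∧
    (∀ m : Fin 2 →₀ ℕ, Tendsto (fun n => coeff m (Fs n)) atTop (nhds (coeff m F))) ∧
    (∀ n, GermEquiv (zeroSet (Fs n)) 0 (zeroSet fx) 0) ∧
    (∀ n, GermEquiv (zeroSet (Fs n)) (y n) (zeroSet fy) 0)

lemma germEquiv_refl (V : Set Pt) (a : Pt) : GermEquiv V a V a :=
  ⟨Set.univ, Set.univ, isOpen_univ, isOpen_univ, Set.mem_univ a,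
    Homeomorph.refl _, Set.mem_univ a, rfl, fun _ => Iff.rfl⟩

/-- Key analytic lemma: near a point `(0, t₀)`, the curve
`x² + (y - t₀)^m · g(y) = 0` with `g(t₀) ≠ 0` is topologically
equivalent to `x² + y^m = 0` at the origin. -/
lemma germEquiv_slice (m : ℕ) (g : ℂ → ℂ) (hg : Continuous g) (t₀ : ℂ)
    (hc : g t₀ ≠ 0) :
    GermEquiv {p : Pt | p 0 ^ 2 + (p 1 - t₀) ^ m * g (p 1) = 0} ![0, t₀]
      {p : Pt | p 0 ^ 2 + p 1 ^ m = 0} (0 : Pt) := by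
  set c := g t₀ with hcdef
  set s : ℂ → ℂ := fun y => Complex.exp (Complex.log c / 2 + Complex.log (g y / c) / 2)
    with hsdef
  set V : Set ℂ := (fun y => g y / c) ⁻¹' Complex.slitPlane with hVdef
  have hVopen : IsOpen V := Complex.isOpen_slitPlane.preimage (hg.div_const c)
  have ht₀V : t₀ ∈ V := by
    simp only [hVdef, Set.mem_preimage, div_self hc]
    rw [← hcdef, div_self hc]
    exact Complex.one_mem_slitPlane
  have hgne : ∀ y ∈ V, g y ≠ 0 := by
    intro y hy h
    exact Complex.slitPlane_ne_zero hy (by simp [h])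
  have hsne : ∀ y, s y ≠ 0 := fun y => Complex.exp_ne_zero _
  have hssq : ∀ y ∈ V, s y ^ 2 = g y := by
    intro y hy
    have h1 : g y / c ≠ 0 := Complex.slitPlane_ne_zero hy
    have : (Complex.log c / 2 + Complex.log (g y / c) / 2) +
        (Complex.log c / 2 + Complex.log (g y / c) / 2)
        = Complex.log c + Complex.log (g y / c) := by ring
    rw [hsdef, sq, ← Complex.exp_add, this, Complex.exp_add,
      Complex.exp_log hc, Complex.exp_log h1, mul_div_cancel₀ _ hc]
  have hs_cont : ContinuousOn s V := by
    intro y hy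
    apply ContinuousAt.continuousWithinAt
    have hy' : g y / c ∈ Complex.slitPlane := hy
    have hlog : ContinuousAt (fun y => Complex.log (g y / c)) y :=
      ((hg.div_const c).continuousAt).clog hy'
    exact Complex.continuous_exp.continuousAt.comp
      (continuousAt_const.add (hlog.div_const 2))
  set U : Set Pt := {p : Pt | p 1 ∈ V} with hUdef
  set U' : Set Pt := {p : Pt | p 1 + t₀ ∈ V} with hU'def
  have hU : IsOpen U := hVopen.preimage (continuous_apply 1)
  have hU' : IsOpen U' := hVopen.preimage ((continuous_apply 1).add continuous_const)
  have h0U' : (0 : Pt) ∈ U' := by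
    show (0 : ℂ) + t₀ ∈ V
    simpa using ht₀V
  set f : Pt → Pt := fun p => ![p 0 / s (p 1), p 1 - t₀] with hfdef
  set finv : Pt → Pt := fun q => ![q 0 * s (q 1 + t₀), q 1 + t₀] with hfinvdef
  have hfU : ∀ p ∈ U, f p ∈ U' := by
    intro p hp
    show (f p) 1 + t₀ ∈ V
    simp [hfdef]; exact hp
  have hfinvU : ∀ q ∈ U', finv q ∈ U := by
    intro q hq
    show (finv q) 1 ∈ V
    simp [hfinvdef]; exact hq
  have hfinv_f : ∀ p ∈ U, finv (f p) = p := by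
    intro p _
    funext i
    fin_cases i <;> simp [hfdef, hfinvdef, div_mul_cancel₀ _ (hsne (p 1))]
  have hf_finv : ∀ q ∈ U', f (finv q) = q := by
    intro q _
    funext i
    fin_cases i <;> simp [hfdef, hfinvdef, mul_div_cancel_right₀ _ (hsne (q 1 + t₀))]
  have hscomp : ContinuousOn (fun p : Pt => s (p 1)) U :=
    hs_cont.comp (continuous_apply 1).continuousOn (fun p hp => hp)
  have hscomp' : ContinuousOn (fun q : Pt => s (q 1 + t₀)) U' :=
    hs_cont.comp ((continuous_apply 1).add continuous_const).continuousOn (fun q hq => hq)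
  have cont_f : ContinuousOn f U := by
    rw [continuousOn_pi]
    intro i
    fin_cases i
    · simpa [hfdef] using (show ContinuousOn (fun y : Pt => y 0 / s (y 1)) U from
        ((continuous_apply 0).continuousOn.div hscomp (fun p hp => hsne _)))
    · simpa [hfdef] using (show ContinuousOn (fun y : Pt => y 1 - t₀) U from
        ((continuous_apply 1).sub continuous_const).continuousOn)
  have cont_finv : ContinuousOn finv U' := by
    rw [continuousOn_pi]
    intro i
    fin_cases i
    · simpa [hfinvdef] using (show ContinuousOn (fun y : Pt => y 0 * s (y 1 + t₀)) U' from
        ((continuous_apply 0).continuousOn.mul hscomp'))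
    · simpa [hfinvdef] using (show ContinuousOn (fun y : Pt => y 1 + t₀) U' from
        ((continuous_apply 1).add continuous_const).continuousOn)
  have haU : (![0, t₀] : Pt) ∈ U := by
    show (![0, t₀] : Pt) 1 ∈ V
    simpa using ht₀V
  refine ⟨U, U', hU, hU', h0U',
    ⟨⟨fun p => ⟨f p, hfU p p.2⟩, fun q => ⟨finv q, hfinvU q q.2⟩,
      fun p => Subtype.ext (hfinv_f p p.2), fun q => Subtype.ext (hf_finv q q.2)⟩,
      (cont_f.restrict.subtype_mk _), (cont_finv.restrict.subtype_mk _)⟩,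
    haU, ?_, ?_⟩
  · show f ![0, t₀] = (0 : Pt)
    funext i
    fin_cases i <;> simp [hfdef]
  · rintro ⟨p, hp⟩
    show p 0 ^ 2 + (p 1 - t₀) ^ m * g (p 1) = 0 ↔ (f p) 0 ^ 2 + ((f p) 1) ^ m = 0
    have hG : g (p 1) ≠ 0 := hgne _ hp
    have hfp0 : (f p) 0 = p 0 / s (p 1) := by simp [hfdef]
    have hfp1 : (f p) 1 = p 1 - t₀ := by simp [hfdef]
    rw [hfp0, hfp1, div_pow, hssq _ hp]
    have key : p 0 ^ 2 / g (p 1) + (p 1 - t₀) ^ m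
        = (p 0 ^ 2 + (p 1 - t₀) ^ m * g (p 1)) / g (p 1) := by
      field_simp
    rw [key, div_eq_zero_iff]
    simp [hG]

/-- The deforming family. -/
def Gfam (k l : ℕ) (t : ℂ) : Poly2 := X 0 ^ 2 + X 1 ^ (k+1) * (X 1 - C t) ^ (l+1)

lemma Gfam_eval (k l : ℕ) (t : ℂ) (p : Pt) :
    eval p (Gfam k l t) = p 0 ^ 2 + p 1 ^ (k+1) * (p 1 - t) ^ (l+1) := by
  simp [Gfam]

lemma Gfam_zero (k l : ℕ) :
    Gfam k l 0 = X 0 ^ 2 + X 1 ^ (k+l+2) := by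
  have : (k+1) + (l+1) = k+l+2 := by ring
  rw [Gfam, map_zero, sub_zero, ← pow_add, this]

lemma Gfam_totalDegree (k l : ℕ) (t : ℂ) :
    (Gfam k l t).totalDegree ≤ k + l + 2 := by
  refine le_trans (totalDegree_add _ _) (max_le ?_ ?_)
  · calc (X 0 ^ 2 : Poly2).totalDegree ≤ 2 * (X 0 : Poly2).totalDegree :=
        totalDegree_pow _ _
      _ ≤ k + l + 2 := by rw [totalDegree_X]; omega
  · refine le_trans (totalDegree_mul _ _) ?_
    have h1 : ((X 1 : Poly2) ^ (k+1)).totalDegree ≤ k+1 := by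
      refine le_trans (totalDegree_pow _ _) ?_
      rw [totalDegree_X]; omega
    have h2 : ((X 1 - C t : Poly2)).totalDegree ≤ 1 := by
      rw [sub_eq_add_neg, ← C_neg]
      refine le_trans (totalDegree_add _ _) (max_le ?_ ?_)
      · rw [totalDegree_X]
      · rw [totalDegree_C]; omega
    have h3 : (((X 1 - C t : Poly2)) ^ (l+1)).totalDegree ≤ l+1 := by
      refine le_trans (totalDegree_pow _ _) ?_
      calc (l+1) * ((X 1 - C t : Poly2)).totalDegree ≤ (l+1) * 1 :=
        Nat.mul_le_mul_left _ h2
        _ = l+1 := by ring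
    omega

/-- For all `k, l ≥ 1`, for every sufficiently large degree `d` there is a
result of a collision in degree `d` of an `A_k`-singularity `u² + v^(k+1)` and an
`A_l`-singularity `u² + v^(l+1)` whose germ at the origin is topologically equivalent to the
`A_(k+l+1)`-singularity `u² + v^(k+l+2)`. -/
theorem Ak_plus_Al_collision (k l : ℕ) (hk : 1 ≤ k) (hl : 1 ≤ l) :
    ∃ D : ℕ, ∀ d : ℕ, D ≤ d → ∃ F : Poly2,
      IsCollisionResult d (X 0 ^ 2 + X 1 ^ (k+1)) (X 0 ^ 2 + X 1 ^ (l+1)) F ∧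
      GermEquiv (zeroSet F) 0 (zeroSet (X 0 ^ 2 + X 1 ^ (k+l+2))) 0 := by
  refine ⟨k+l+2, fun d hd => ?_⟩
  set t : ℕ → ℂ := fun n => ((1 / (n+1) : ℝ) : ℂ) with htdef
  have htne : ∀ n, t n ≠ 0 := by
    intro n
    have h1 : (0:ℝ) < 1 / (n+1) := by positivity
    simp only [htdef, ne_eq, Complex.ofReal_eq_zero]
    exact ne_of_gt h1
  have htend : Tendsto t atTop (nhds 0) := by
    rw [show (0:ℂ) = ((0:ℝ):ℂ) from Complex.ofReal_zero.symm]
    exact (Complex.continuous_ofReal.tendsto 0).comp tendsto_one_div_add_atTop_nhds_zero_nat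
  have h0pt : (0 : Pt) = ![0, (0:ℂ)] := by
    funext i; fin_cases i <;> rfl
  refine ⟨X 0 ^ 2 + X 1 ^ (k+l+2),
    ⟨?_, fun n => Gfam k l (t n), fun n => ![0, t n], ?_, ?_, ?_, ?_, ?_, ?_⟩,
    germEquiv_refl _ _⟩
  · rw [← Gfam_zero]
    exact (Gfam_totalDegree k l 0).trans hd
  · intro n
    exact (Gfam_totalDegree k l (t n)).trans hd
  · intro n h
    have h1 := congrFun h 1
    simp only [Matrix.cons_val_one, Matrix.head_cons, Pi.zero_apply] at h1
    exact htne n h1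
  · rw [tendsto_pi_nhds]
    intro i
    fin_cases i
    · simpa using (tendsto_const_nhds : Tendsto (fun _ : ℕ => (0:ℂ)) atTop (nhds 0))
    · simpa using htend
  · intro m
    set P : MvPolynomial (Fin 2) (Polynomial ℂ) :=
      X 0 ^ 2 + X 1 ^ (k+1) * (X 1 - C Polynomial.X) ^ (l+1) with hPdef
    have hmap : ∀ τ : ℂ, MvPolynomial.map (Polynomial.evalRingHom τ) P = Gfam k l τ := by
      intro τ
      simp [hPdef, Gfam, MvPolynomial.map_X, MvPolynomial.map_C]
    have h1 : ∀ τ : ℂ, coeff m (Gfam k l τ) = Polynomial.eval τ (coeff m P) := by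
      intro τ
      rw [← hmap τ, coeff_map]
      rfl
    have h2 : coeff m (X 0 ^ 2 + X 1 ^ (k+l+2) : Poly2) = Polynomial.eval 0 (coeff m P) := by
      rw [← Gfam_zero, h1]
    rw [h2]
    simp only [h1]
    exact ((coeff m P).continuous.tendsto 0).comp htend
  · intro n
    have hgc : Continuous (fun y : ℂ => (y - t n) ^ (l+1)) :=
      (continuous_id.sub continuous_const).pow _
    have hg0 : (fun y : ℂ => (y - t n) ^ (l+1)) 0 ≠ 0 := by
      simp only [zero_sub]
      exact pow_ne_zero _ (neg_ne_zero.mpr (htne n))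
    have key := germEquiv_slice (k+1) (fun y => (y - t n) ^ (l+1)) hgc 0 hg0
    rw [← h0pt] at key
    have e1 : zeroSet (Gfam k l (t n)) =
        {p : Pt | p 0 ^ 2 + (p 1 - 0) ^ (k+1) * (fun y : ℂ => (y - t n) ^ (l+1)) (p 1) = 0} := by
      ext p
      simp [zeroSet, Gfam_eval]
    have e2 : zeroSet (X 0 ^ 2 + X 1 ^ (k+1) : Poly2) =
        {p : Pt | p 0 ^ 2 + p 1 ^ (k+1) = 0} := by
      ext p
      simp [zeroSet]
    rw [e1, e2]
    exact key
  · intro n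
    have hgc : Continuous (fun y : ℂ => y ^ (k+1)) := continuous_pow _
    have hg0 : (fun y : ℂ => y ^ (k+1)) (t n) ≠ 0 := pow_ne_zero _ (htne n)
    have key := germEquiv_slice (l+1) (fun y => y ^ (k+1)) hgc (t n) hg0
    have e1 : zeroSet (Gfam k l (t n)) =
        {p : Pt | p 0 ^ 2 + (p 1 - t n) ^ (l+1) * (fun y : ℂ => y ^ (k+1)) (p 1) = 0} := by
      ext p
      simp only [zeroSet, Gfam_eval, Set.mem_setOf_eq]
      rw [mul_comm (p 1 ^ (k+1))]
    have e2 : zeroSet (X 0 ^ 2 + X 1 ^ (l+1) : Poly2) =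
        {p : Pt | p 0 ^ 2 + p 1 ^ (l+1) = 0} := by
      ext p
      simp [zeroSet]
    rw [e1, e2]
    exact key

end
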